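/- For every sequence a = (a_k) in l^2, the L^∞ norm of the Rademacher series Ta(t) = Σ_{k=1}^∞ a_k r_k(t) equals the l^1 norm of a, i.e. ‖Ta‖_{L^∞[0,1]} = Σ_{k=1}^∞ |a_k| (with the convention that both sides are infinite if a ∉ l^1). -/

import Mathlib

open MeasureTheory Filter Topology
open scoped NNReal ENNReal

/-- The Rademacher functions `r_{k+1}(t) = sign (sin (2^k π t))` (0-indexed). -/
noncomputable def rademacher (k : ℕ) (t : ℝ) : ℝ :=
  Real.sign (Real.sin (2 ^ k * Real.pi * t))

noncomputable def fR (k : ℕ) (t : ℝ) : ℝ := (-1 : ℝ) ^ ⌊(2:ℝ)^k * t⌋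

lemma sign_sin_pi (s : ℝ) (hs : ¬ ∃ n : ℤ, s = n) :
    Real.sign (Real.sin (s * Real.pi)) = (-1 : ℝ) ^ ⌊s⌋ := by
  have hfr : 0 < Int.fract s := by
    rcases lt_or_eq_of_le (Int.fract_nonneg s) with h | h
    · exact h
    · refine absurd ⟨⌊s⌋, ?_⟩ hs
      have := Int.fract s
      rw [Int.fract] at h
      linarith
  have : s * Real.pi = Int.fract s * Real.pi + ⌊s⌋ * Real.pi := by
    rw [Int.fract]; ring
  rw [this, Real.sin_add_int_mul_pi]
  have hpos : 0 < Real.sin (Int.fract s * Real.pi) :=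
    Real.sin_pos_of_pos_of_lt_pi (by positivity)
      (by nlinarith [Int.fract_lt_one s, Real.pi_pos])
  rcases Int.even_or_odd ⌊s⌋ with h | h
  · rw [h.neg_one_zpow, one_mul, Real.sign_of_pos hpos]
  · rw [Odd.neg_one_zpow h, neg_one_mul, Real.sign_of_neg (by linarith)]

lemma rademacher_eq_fR (k : ℕ) (t : ℝ) (h : ¬ ∃ n : ℤ, (2:ℝ)^k * t = n) :
    rademacher k t = fR k t := by
  have : (2:ℝ) ^ k * Real.pi * t = ((2:ℝ)^k * t) * Real.pi := by ring
  rw [rademacher, this, sign_sin_pi _ h, fR]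

lemma fR_measurable (k : ℕ) : Measurable (fR k) := by
  have h1 : Measurable fun t : ℝ => ⌊(2:ℝ)^k * t⌋ :=
    Int.measurable_floor.comp (measurable_const.mul measurable_id)
  exact (measurable_from_top (f := fun n : ℤ => (-1:ℝ)^n)).comp h1

lemma fR_abs (k : ℕ) (t : ℝ) : |fR k t| = 1 := by
  rw [fR]
  rcases Int.even_or_odd ⌊(2:ℝ)^k * t⌋ with h | h
  · rw [h.neg_one_zpow]; norm_num
  · rw [Odd.neg_one_zpow h]; norm_num

lemma fR_sq (k : ℕ) (t : ℝ) : fR k t * fR k t = 1 := by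
  have := fR_abs k t
  rcases abs_eq (zero_le_one (α := ℝ)) |>.mp this with h | h <;> rw [h] <;> norm_num

lemma dyadic_null : volume {t : ℝ | ∃ k : ℕ, ∃ n : ℤ, (2:ℝ)^k * t = n} = 0 := by
  have : {t : ℝ | ∃ k : ℕ, ∃ n : ℤ, (2:ℝ)^k * t = n} ⊆
      ⋃ (k : ℕ), ⋃ (n : ℤ), {((n : ℝ) / 2^k)} := by
    rintro t ⟨k, n, h⟩
    refine Set.mem_iUnion.2 ⟨k, Set.mem_iUnion.2 ⟨n, ?_⟩⟩
    rw [Set.mem_singleton_iff, eq_div_iff (by positivity), mul_comm]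
    exact h
  refine measure_mono_null this ?_
  refine (measure_iUnion_null fun k => measure_iUnion_null fun n => measure_singleton _)

-- value of fR on a dyadic subinterval
lemma fR_on_interval (k : ℕ) (M : ℕ) (t : ℝ) (ht : t ∈ Set.Ioo ((M:ℝ)/2^k) ((M+1)/2^k)) :
    fR k t = (-1:ℝ)^M := by
  have h2 : (0:ℝ) < 2^k := by positivity
  have h1 : ⌊(2:ℝ)^k * t⌋ = (M:ℤ) := by
    rw [Int.floor_eq_iff]
    constructor
    · push_cast
      obtain ⟨hl, hr⟩ := ht
      rw [div_lt_iff₀ h2] at hl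
      linarith
    · push_cast
      obtain ⟨hl, hr⟩ := ht
      rw [lt_div_iff₀ h2] at hr
      linarith
  rw [fR, h1]
  norm_cast

lemma sum_range_two_mul (n : ℕ) (g : ℕ → ℝ) :
    ∑ i ∈ Finset.range (2*n), g i = ∑ i ∈ Finset.range n, (g (2*i) + g (2*i+1)) := by
  induction n with
  | zero => simp
  | succ n ih =>
    rw [Nat.mul_succ, Finset.sum_range_succ, Finset.sum_range_succ, Finset.sum_range_succ, ih]
    rw [add_assoc]

lemma div_succ_eq (M e : ℕ) (hM : Even M) (he : Even e) (he0 : 0 < e) :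
    (M+1)/e = M/e := by
  obtain ⟨e', rfl⟩ := he
  obtain ⟨M', rfl⟩ := hM
  have he' : 0 < e' := by omega
  have h1 : e' + e' = 2 * e' := by ring
  have h2 : M' + M' = 2 * M' := by ring
  rw [h1, h2, ← Nat.div_div_eq_div_mul, ← Nat.div_div_eq_div_mul]
  congr 1
  omega

lemma fR_on_subinterval (j k : ℕ) (hjk : j ≤ k) (M : ℕ) (t : ℝ)
    (ht : t ∈ Set.Ioo ((M:ℝ)/2^k) ((M+1)/2^k)) :
    fR j t = (-1:ℝ)^(M / 2^(k-j)) := by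
  set e := 2^(k-j) with he
  set Q := M / e with hQ
  have hepos : 0 < e := by positivity
  have hmod := Nat.div_add_mod M e
  rw [← hQ] at hmod
  have hmlt := Nat.mod_lt M hepos
  have h2k : (2:ℝ)^k = 2^j * 2^(k-j) := by
    rw [← pow_add]; congr 1; omega
  have hle1 : ((Q:ℝ))/2^j ≤ (M:ℝ)/2^k := by
    rw [div_le_div_iff₀ (by positivity) (by positivity), h2k]
    have : Q * e ≤ M := Nat.div_mul_le_self M e
    calc ((Q:ℝ)) * (2^j * 2^(k-j)) = ((Q * e : ℕ) : ℝ) * 2^j := by push_cast [he]; ring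
    _ ≤ (M:ℝ) * 2^j := by
        have : ((Q * e : ℕ) : ℝ) ≤ (M:ℝ) := by exact_mod_cast this
        nlinarith [pow_pos (by norm_num : (0:ℝ) < 2) j]
  have hle2 : ((M:ℝ)+1)/2^k ≤ ((Q:ℝ)+1)/2^j := by
    rw [div_le_div_iff₀ (by positivity) (by positivity), h2k]
    have : M + 1 ≤ (Q + 1) * e := by
      have h3 : (Q + 1) * e = e * Q + e := by ring
      rw [h3]; rw [mul_comm] at hmod ⊢; linarith [hmod, hmlt]
    calc ((M:ℝ)+1) * 2^j = (((M+1:ℕ)) : ℝ) * 2^j := by push_cast; ring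
    _ ≤ (((Q+1)*e : ℕ) : ℝ) * 2^j := by
        have : (((M+1:ℕ)) : ℝ) ≤ (((Q+1)*e : ℕ) : ℝ) := by exact_mod_cast this
        nlinarith [pow_pos (by norm_num : (0:ℝ) < 2) j]
    _ = ((Q:ℝ)+1) * (2^j * 2^(k-j)) := by push_cast [he]; ring
  exact fR_on_interval j Q t ⟨lt_of_le_of_lt hle1 ht.1, lt_of_lt_of_le ht.2 hle2⟩

lemma fR_intervalIntegrable (j k : ℕ) (a b : ℝ) :
    IntervalIntegrable (fun t => fR j t * fR k t) volume a b := by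
  rw [intervalIntegrable_iff]
  have hc : IntegrableOn (fun _ : ℝ => (1:ℝ)) (Set.uIoc a b) volume :=
    MeasureTheory.integrableOn_const (by rw [Set.uIoc]; exact measure_Ioc_lt_top.ne)
  refine hc.mono' ((fR_measurable j).mul (fR_measurable k)).aestronglyMeasurable ?_
  filter_upwards with t
  rw [Real.norm_eq_abs, abs_mul, fR_abs, fR_abs]; norm_num

/-- integral of `fR j * fR k` over a level-`k` dyadic interval -/
lemma piece_integral (j k : ℕ) (hjk : j ≤ k) (M : ℕ) :
    ∫ t in ((M:ℝ)/2^k)..((M+1:ℕ)/2^k), fR j t * fR k t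
      = ((-1:ℝ)^(M / 2^(k-j)) * (-1)^M) * (1/2^k) := by
  have h2k : (0:ℝ) < 2^k := by positivity
  have hlt : ((M:ℝ))/2^k < ((M+1:ℕ))/2^k := by
    rw [div_lt_div_iff₀ h2k h2k]; push_cast; nlinarith
  have hcast : ((M+1:ℕ):ℝ) = (M:ℝ)+1 := by push_cast; ring
  rw [intervalIntegral.integral_of_le hlt.le, MeasureTheory.integral_Ioc_eq_integral_Ioo,
    hcast]
  rw [setIntegral_congr_fun measurableSet_Ioo
    (g := fun _ : ℝ => ((-1:ℝ)^(M / 2^(k-j)) * (-1)^M)) ?_]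
  · rw [setIntegral_const, measureReal_def, Real.volume_Ioo, smul_eq_mul]
    have h1 : ((M:ℝ)+1)/2^k - (M:ℝ)/2^k = 1/2^k := by field_simp; ring
    rw [h1, ENNReal.toReal_ofReal (by positivity)]
    ring
  · intro t ht
    show fR j t * fR k t = _
    rw [fR_on_subinterval j k hjk M t ht, fR_on_interval k M t ht]

lemma dyadic_orthonormal (N j k m : ℕ) (hNj : N ≤ j) (hjk : j ≤ k) :
    ∫ t in Set.Ioo ((m:ℝ)/2^N) (((m:ℝ)+1)/2^N), fR j t * fR k t
      = if j = k then (1/2^N : ℝ) else 0 := by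
  rcases eq_or_lt_of_le hjk with rfl | hjk'
  · rw [if_pos rfl]
    rw [setIntegral_congr_fun measurableSet_Ioo (g := fun _ : ℝ => (1:ℝ))
      (fun t _ => fR_sq j t)]
    rw [setIntegral_const, measureReal_def, Real.volume_Ioo, smul_eq_mul]
    have h1 : ((m:ℝ)+1)/2^N - (m:ℝ)/2^N = 1/2^N := by field_simp; ring
    rw [h1, ENNReal.toReal_ofReal (by positivity), mul_one]
  · simp only [if_neg (Nat.ne_of_lt hjk')]
    set d := k - N with hd
    have hd1 : 1 ≤ d := by omega
    have hkNd : k = N + d := by omega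
    set A : ℕ → ℝ := fun i => ((m * 2^d + i : ℕ):ℝ)/2^k with hA
    have key := intervalIntegral.sum_integral_adjacent_intervals
      (a := A) (n := 2^d) (μ := volume)
      (fun i _ => fR_intervalIntegrable j k _ _)
    -- endpoints
    have hA0 : A 0 = (m:ℝ)/2^N := by
      rw [hA]; push_cast
      rw [hkNd, pow_add]
      field_simp
      ring
    have hAn : A (2^d) = ((m:ℝ)+1)/2^N := by
      rw [hA]; push_cast
      rw [hkNd, pow_add]
      field_simp
    -- each piece
    have hpiece : ∀ i : ℕ, ∫ t in A i..A (i+1), fR j t * fR k t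
        = ((-1:ℝ)^((m * 2^d + i) / 2^(k-j)) * (-1)^(m * 2^d + i)) * (1/2^k) := by
      intro i
      have := piece_integral j k hjk (m * 2^d + i)
      simp only [hA]
      rw [(by ring : m * 2 ^ d + (i + 1) = m * 2 ^ d + i + 1)]
      exact this
    -- sum vanishes
    have hsum : ∑ i ∈ Finset.range (2^d), (∫ t in A i..A (i+1), fR j t * fR k t) = 0 := by
      have h2d : 2^d = 2 * 2^(d-1) := by
        rw [← pow_succ']; congr 1; omega
      rw [h2d, sum_range_two_mul]
      refine Finset.sum_eq_zero fun i _ => ?_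
      rw [hpiece, hpiece]
      have heven : Even (m * 2^d + 2*i) := by
        refine Even.add ?_ (even_two_mul i)
        exact (Even.mul_left (by rw [h2d]; exact even_two_mul _) m)
      have hdiv : (m * 2^d + 2*i + 1) / 2^(k-j) = (m * 2^d + 2*i) / 2^(k-j) := by
        refine div_succ_eq _ _ heven ?_ (by positivity)
        have : k - j = (k-j-1) + 1 := by omega
        rw [this, pow_succ']
        exact even_two_mul _
      have harr : m * 2^d + (2*i+1) = (m * 2^d + 2*i) + 1 := by ring
      rw [harr, hdiv, pow_succ]
      ring
    rw [hsum] at key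
    have := key.symm
    rw [hA0, hAn] at this
    rw [intervalIntegral.integral_of_le ?hle, MeasureTheory.integral_Ioc_eq_integral_Ioo] at this
    case hle =>
      have h2N : (0:ℝ) < 2^N := by positivity
      rw [div_le_div_iff₀ h2N h2N]
      nlinarith
    linarith [this]


lemma fR_mul_integrableOn (j k : ℕ) (u v : ℝ) :
    IntegrableOn (fun t => fR j t * fR k t) (Set.Ioo u v) volume := by
  have hc : IntegrableOn (fun _ : ℝ => (1:ℝ)) (Set.Ioo u v) volume :=
    MeasureTheory.integrableOn_const measure_Ioo_lt_top.ne
  refine hc.mono' ((fR_measurable j).mul (fR_measurable k)).aestronglyMeasurable ?_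
  filter_upwards with t
  rw [Real.norm_eq_abs, abs_mul, fR_abs, fR_abs]; norm_num

lemma dyadic_orthonormal' (N j k m : ℕ) (hNj : N ≤ j) (hNk : N ≤ k) :
    ∫ t in Set.Ioo ((m:ℝ)/2^N) (((m:ℝ)+1)/2^N), fR j t * fR k t
      = if j = k then (1/2^N : ℝ) else 0 := by
  rcases le_total j k with h | h
  · exact dyadic_orthonormal N j k m hNj h
  · rw [setIntegral_congr_fun measurableSet_Ioo
      (g := fun t => fR k t * fR j t) (fun t _ => mul_comm _ _)]
    rw [dyadic_orthonormal N k j m hNk h]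
    by_cases hh : j = k <;> simp [hh] <;> exact fun h' => absurd h'.symm hh

lemma integral_sq_sum (N m : ℕ) (a : ℕ → ℝ) (s : Finset ℕ) (hs : ∀ k ∈ s, N ≤ k) :
    ∫ t in Set.Ioo ((m:ℝ)/2^N) (((m:ℝ)+1)/2^N), (∑ k ∈ s, a k * fR k t)^2
      = (1/2^N) * ∑ k ∈ s, (a k)^2 := by
  set I := Set.Ioo ((m:ℝ)/2^N) (((m:ℝ)+1)/2^N) with hI
  have hint : ∀ j k : ℕ, IntegrableOn (fun t => (a j * a k) * (fR j t * fR k t)) I volume :=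
    fun j k => (fR_mul_integrableOn j k _ _).const_mul _
  calc ∫ t in I, (∑ k ∈ s, a k * fR k t)^2
      = ∫ t in I, ∑ j ∈ s, ∑ k ∈ s, (a j * a k) * (fR j t * fR k t) := by
        refine integral_congr_ae (Filter.Eventually.of_forall fun t => ?_)
        show (∑ k ∈ s, a k * fR k t) ^ 2 = _
        rw [sq, Finset.sum_mul_sum]
        exact Finset.sum_congr rfl fun j _ => Finset.sum_congr rfl fun k _ => by ring
    _ = ∑ j ∈ s, ∑ k ∈ s, ∫ t in I, (a j * a k) * (fR j t * fR k t) := by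
        rw [integral_finset_sum _ (fun j _ => integrable_finset_sum _ (fun k _ => hint j k))]
        exact Finset.sum_congr rfl fun j _ => integral_finset_sum _ (fun k _ => hint j k)
    _ = ∑ j ∈ s, ∑ k ∈ s, (a j * a k) * (if j = k then (1/2^N:ℝ) else 0) := by
        refine Finset.sum_congr rfl fun j hj => Finset.sum_congr rfl fun k hk => ?_
        rw [integral_const_mul, dyadic_orthonormal' N j k m (hs j hj) (hs k hk)]
    _ = (1/2^N) * ∑ k ∈ s, (a k)^2 := by
        rw [Finset.mul_sum]
        refine Finset.sum_congr rfl fun j hj => ?_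
        simp only [mul_ite, mul_zero]
        rw [Finset.sum_ite_eq s j, if_pos hj]
        ring

/-- existence of a dyadic interval where `fR k` takes prescribed signs for `1 ≤ k ≤ N` -/
lemma exists_dyadic (ε : ℕ → ℝ) (hε0 : ε 0 = 1) :
    ∀ N : ℕ, ∃ m : ℕ, m + 1 ≤ 2^N ∧
      ∀ t ∈ Set.Ioo ((m:ℝ)/2^N) (((m:ℝ)+1)/2^N), ∀ k ≤ N, fR k t = ε k ∨ (ε k ≠ 1 ∧ ε k ≠ -1) := by
  intro N
  induction N with
  | zero =>
    refine ⟨0, by norm_num, fun t ht k hk => ?_⟩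
    interval_cases k
    left
    rw [hε0]
    have := fR_on_interval 0 0 t (by push_cast at ht ⊢; simpa using ht)
    simpa using this
  | succ N ih =>
    obtain ⟨m, hm, hmain⟩ := ih
    by_cases hsgn : ε (N+1) = -1
    · -- choose odd child
      refine ⟨2*m+1, by omega, fun t ht k hk => ?_⟩
      have hsub : t ∈ Set.Ioo ((m:ℝ)/2^N) (((m:ℝ)+1)/2^N) := by
        obtain ⟨h1, h2⟩ := ht
        have h2N : (0:ℝ) < 2^N := by positivity
        constructor
        · rw [div_lt_iff₀ h2N]
          rw [div_lt_iff₀ (by positivity : (0:ℝ) < 2^(N+1))] at h1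
          push_cast at h1 ⊢
          rw [pow_succ] at h1
          nlinarith
        · rw [lt_div_iff₀ h2N]
          rw [lt_div_iff₀ (by positivity : (0:ℝ) < 2^(N+1))] at h2
          push_cast at h2 ⊢
          rw [pow_succ] at h2
          nlinarith
      rcases Nat.lt_or_ge k (N+1) with hk' | hk'
      · exact hmain t hsub k (by omega)
      · have hkN : k = N + 1 := by omega
        subst hkN
        left
        have := fR_on_interval (N+1) (2*m+1) t (by push_cast at ht ⊢; exact ht)
        rw [this, hsgn]
        rw [pow_succ, pow_mul]
        norm_num
    · -- choose even child, sign +1 (or ε k degenerate)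
      refine ⟨2*m, by omega, fun t ht k hk => ?_⟩
      have hsub : t ∈ Set.Ioo ((m:ℝ)/2^N) (((m:ℝ)+1)/2^N) := by
        obtain ⟨h1, h2⟩ := ht
        have h2N : (0:ℝ) < 2^N := by positivity
        constructor
        · rw [div_lt_iff₀ h2N]
          rw [div_lt_iff₀ (by positivity : (0:ℝ) < 2^(N+1))] at h1
          push_cast at h1 ⊢
          rw [pow_succ] at h1
          nlinarith
        · rw [lt_div_iff₀ h2N]
          rw [lt_div_iff₀ (by positivity : (0:ℝ) < 2^(N+1))] at h2
          push_cast at h2 ⊢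
          rw [pow_succ] at h2
          nlinarith
      rcases Nat.lt_or_ge k (N+1) with hk' | hk'
      · exact hmain t hsub k (by omega)
      · have hkN : k = N + 1 := by omega
        subst hkN
        have hval := fR_on_interval (N+1) (2*m) t (by push_cast at ht ⊢; exact ht)
        by_cases h1 : ε (N+1) = 1
        · left
          rw [hval, h1, pow_mul]
          norm_num
        · exact Or.inr ⟨h1, hsgn⟩

lemma abs_sign_le_one (y : ℝ) : |Real.sign y| ≤ 1 := by
  rcases lt_trichotomy y 0 with h | h | h
  · rw [Real.sign_of_neg h]; norm_num
  · rw [h, Real.sign_zero]; norm_num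
  · rw [Real.sign_of_pos h]; norm_num

set_option maxHeartbeats 1000000 in
/-- For `a ∈ ℓ²`, the `L^∞[0,1]` norm of `Ta = ∑ a_k r_k` equals the `ℓ¹` norm of `a`
(both sides being infinite if `a ∉ ℓ¹`). -/
theorem rademacher_sup_norm_eq_l1 (a : ℕ → ℝ) (ha : Summable fun k => (a k) ^ 2)
    (x : ℝ → ℝ)
    (hx : ∀ᵐ t ∂(volume.restrict (Set.Icc (0:ℝ) 1)),
      HasSum (fun k => a k * rademacher k t) (x t)) :
    eLpNorm x ⊤ (volume.restrict (Set.Icc (0:ℝ) 1)) = ∑' k, ENNReal.ofReal |a k| := by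
  set μ := volume.restrict (Set.Icc (0:ℝ) 1) with hμ
  -- sign sequence
  set s₀ : ℝ := if a 0 < 0 then -1 else 1 with hs₀
  set ε : ℕ → ℝ := fun k => if 0 ≤ s₀ * a k then 1 else -1 with hε
  have hs₀pm : s₀ = 1 ∨ s₀ = -1 := by
    rw [hs₀]; split_ifs <;> simp
  have hε0 : ε 0 = 1 := by
    simp only [hε]
    rw [if_pos]
    by_cases h : a 0 < 0
    · rw [hs₀, if_pos h]; nlinarith
    · rw [hs₀, if_neg h]; push_neg at h; nlinarith
  have hεpm : ∀ k, ε k = 1 ∨ ε k = -1 := fun k => by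
    simp only [hε]; split_ifs <;> simp
  have haε : ∀ k, a k * ε k = s₀ * |a k| := by
    intro k
    simp only [hε]
    rcases hs₀pm with h | h <;> rw [h] <;> split_ifs with h2 <;>
      rcases abs_cases (a k) with ⟨h3, h4⟩ | ⟨h3, h4⟩ <;> nlinarith
  -- a.e. rademacher = fR
  have hμnull : ∀ (S : Set ℝ), volume S = 0 → μ S = 0 := by
    intro S hS
    rw [hμ, Measure.restrict_apply' measurableSet_Icc]
    exact measure_mono_null Set.inter_subset_left hS
  have hG : ∀ᵐ t ∂μ, ∀ k, rademacher k t = fR k t := by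
    have h1 : μ {t : ℝ | ∃ k : ℕ, ∃ n : ℤ, (2:ℝ)^k * t = n} = 0 := hμnull _ dyadic_null
    rw [ae_iff]
    refine measure_mono_null ?_ h1
    intro t ht
    simp only [Set.mem_setOf_eq] at ht ⊢
    push_neg at ht
    obtain ⟨k, hk⟩ := ht
    refine ⟨k, ?_⟩
    by_contra hcon
    exact hk (rademacher_eq_fR k t hcon)
  have hae : ∀ᵐ t ∂μ, HasSum (fun k => a k * fR k t) (x t) := by
    filter_upwards [hx, hG] with t h1 h2
    simpa only [h2] using h1
  -- measurable representative
  set g : ℕ → ℝ → ℝ := fun M t => ∑ k ∈ Finset.range M, a k * fR k t with hg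
  have hgmeas : ∀ M, Measurable (g M) := fun M =>
    Finset.measurable_sum _ (fun k _ => (fR_measurable k).const_mul (a k))
  have hxaem : AEMeasurable x μ := by
    refine aemeasurable_of_tendsto_metrizable_ae atTop (fun M => (hgmeas M).aemeasurable) ?_
    filter_upwards [hae] with t h1
    exact h1.tendsto_sum_nat
  set x' : ℝ → ℝ := hxaem.mk x with hx'
  have hx'meas : Measurable x' := hxaem.measurable_mk
  have hx'ae : x =ᵐ[μ] x' := hxaem.ae_eq_mk
  have help : eLpNorm x ⊤ μ = eLpNorm x' ⊤ μ := eLpNorm_congr_ae hx'ae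
  refine le_antisymm ?_ ?_
  · -- upper bound
    by_cases hR : (∑' k, ENNReal.ofReal |a k|) = ⊤
    · rw [hR]; exact le_top
    · have h2 : Summable (fun k => Real.toNNReal |a k|) :=
        ENNReal.tsum_coe_ne_top_iff_summable.1 hR
      have hsum1 : Summable (fun k => |a k|) := by
        have := NNReal.summable_coe.2 h2
        refine this.congr fun k => ?_
        exact Real.coe_toNNReal _ (abs_nonneg _)
      have haebound : ∀ᵐ t ∂μ, ‖x t‖ ≤ ∑' k, |a k| := by
        filter_upwards [hx] with t ht
        rw [Real.norm_eq_abs, ← ht.tsum_eq]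
        have hsum2 : Summable (fun k => ‖a k * rademacher k t‖) := by
          refine Summable.of_nonneg_of_le (fun k => norm_nonneg _) (fun k => ?_) hsum1
          rw [Real.norm_eq_abs, abs_mul]
          calc |a k| * |rademacher k t| ≤ |a k| * 1 :=
            mul_le_mul_of_nonneg_left (abs_sign_le_one _) (abs_nonneg _)
          _ = |a k| := mul_one _
        refine (norm_tsum_le_tsum_norm hsum2).trans ?_
        refine hsum2.tsum_le_tsum (fun k => ?_) hsum1
        rw [Real.norm_eq_abs, abs_mul]
        calc |a k| * |rademacher k t| ≤ |a k| * 1 :=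
          mul_le_mul_of_nonneg_left (abs_sign_le_one _) (abs_nonneg _)
        _ = |a k| := mul_one _
      calc eLpNorm x ⊤ μ = eLpNormEssSup x μ := by rw [← eLpNorm_exponent_top]
      _ ≤ ENNReal.ofReal (∑' k, |a k|) := eLpNormEssSup_le_of_ae_bound haebound
      _ = ∑' k, ENNReal.ofReal |a k| :=
          ENNReal.ofReal_tsum_of_nonneg (fun _ => abs_nonneg _) hsum1
  · -- lower bound
    rw [← not_lt]
    intro hcon
    obtain ⟨b, hb1, hb2⟩ := exists_between hcon
    refine absurd ?_ hb1.not_ge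
    -- show b ≤ eLpNorm x ⊤ μ
    have hbne : b ≠ ⊤ := (lt_of_lt_of_le hb2 le_top).ne
    rw [ENNReal.tsum_eq_iSup_sum, lt_iSup_iff] at hb2
    obtain ⟨s, hbs⟩ := hb2
    set N₀ := s.sup id + 1 with hN₀
    have hsub : s ⊆ Finset.range N₀ := fun k hk =>
      Finset.mem_range.2 (Nat.lt_succ_of_le (Finset.le_sup (f := id) hk))
    set P : ℝ := ∑ k ∈ Finset.range N₀, |a k| with hP
    have hbP : b < ENNReal.ofReal P := by
      refine lt_of_lt_of_le (hbs.trans_le (Finset.sum_le_sum_of_subset hsub)) ?_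
      rw [hP, ENNReal.ofReal_sum_of_nonneg (fun _ _ => abs_nonneg _)]
    have hbP' : b.toReal < P := (ENNReal.lt_ofReal_iff_toReal_lt hbne).1 hbP
    set δ : ℝ := (P - b.toReal)/2 with hδdef
    have hδ : 0 < δ := by rw [hδdef]; linarith
    set c : ℝ := P - δ with hc
    have hbc : b ≤ ENNReal.ofReal c := by
      conv_lhs => rw [← ENNReal.ofReal_toReal hbne]
      exact ENNReal.ofReal_le_ofReal (by rw [hc, hδdef]; linarith [ENNReal.toReal_nonneg (a := b)])
    -- choose N
    have htail : Tendsto (fun N => ∑' j, (a (j + N))^2) atTop (𝓝 0) := by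
      have h1 := ha.hasSum.tendsto_sum_nat
      have h2 : ∀ N : ℕ, ∑' j, (a (j + N))^2
          = (∑' k, (a k)^2) - ∑ k ∈ Finset.range N, (a k)^2 := by
        intro N
        have := ha.sum_add_tsum_nat_add N
        linarith
      simp only [h2]
      have := tendsto_const_nhds (x := ∑' k, (a k)^2) (f := atTop (α := ℕ)) |>.sub h1
      simpa using this
    obtain ⟨N, hN₀le, hNtail⟩ : ∃ N, N₀ ≤ N ∧ ∑' j, (a (j + N))^2 < δ^2/2 := by
      have h1 := htail.eventually_lt_const (by positivity : (0:ℝ) < δ^2/2)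
      exact ((eventually_ge_atTop N₀).and h1).exists
    -- dyadic interval
    obtain ⟨m, hm2N, hmI⟩ := exists_dyadic ε hε0 N
    set I := Set.Ioo ((m:ℝ)/2^N) (((m:ℝ)+1)/2^N) with hI
    have h2Npos : (0:ℝ) < 2^N := by positivity
    have hIsub : I ⊆ Set.Icc (0:ℝ) 1 := by
      intro t ht
      obtain ⟨h1, h2⟩ := ht
      constructor
      · have : (0:ℝ) ≤ (m:ℝ)/2^N := by positivity
        linarith
      · have hm' : (m:ℝ) + 1 ≤ 2^N := by exact_mod_cast hm2N
        have : ((m:ℝ)+1)/2^N ≤ 1 := by rw [div_le_one h2Npos]; linarith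
        linarith
    have hsigns : ∀ t ∈ I, ∀ k < N, fR k t = ε k := by
      intro t ht k hk
      rcases hmI t ht k hk.le with h | h
      · exact h
      · rcases hεpm k with h1 | h1
        · exact absurd h1 h.1
        · exact absurd h1 h.2
    -- value of partial sum on I
    have hSNval : ∀ t ∈ I, g N t = s₀ * ∑ k ∈ Finset.range N, |a k| := by
      intro t ht
      rw [hg]
      dsimp only
      rw [Finset.mul_sum]
      refine Finset.sum_congr rfl fun k hk => ?_
      rw [hsigns t ht k (Finset.mem_range.1 hk), haε k]
    have hPN : P ≤ ∑ k ∈ Finset.range N, |a k| := by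
      refine Finset.sum_le_sum_of_subset_of_nonneg ?_ (fun _ _ _ => abs_nonneg _)
      exact Finset.range_subset_range.2 hN₀le
    have hSNabs : ∀ t ∈ I, P ≤ |g N t| := by
      intro t ht
      rw [hSNval t ht, abs_mul]
      have h1 : |s₀| = 1 := by rcases hs₀pm with h | h <;> rw [h] <;> norm_num
      rw [h1, one_mul, abs_of_nonneg (Finset.sum_nonneg fun _ _ => abs_nonneg _)]
      exact hPN
    -- bad set
    set B := I ∩ {t | δ^2 < (x' t - g N t)^2} with hB
    have hBmeas : MeasurableSet B :=
      measurableSet_Ioo.inter (measurableSet_lt measurable_const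
        (((hx'meas.sub (hgmeas N)).pow_const 2)))
    have hBI : B ⊆ I := Set.inter_subset_left
    -- partial tail sums
    set SM : ℕ → ℝ → ℝ := fun M t => ∑ k ∈ Finset.Ico N M, a k * fR k t with hSM
    have hSMmeas : ∀ M, Measurable (SM M) := fun M =>
      Finset.measurable_sum _ (fun k _ => (fR_measurable k).const_mul (a k))
    have hSMbdd : ∀ M t, |SM M t| ≤ ∑ k ∈ Finset.Ico N M, |a k| := by
      intro M t
      refine (Finset.abs_sum_le_sum_abs _ _).trans (Finset.sum_le_sum fun k _ => ?_)
      rw [abs_mul, fR_abs, mul_one]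
    have hSMint : ∀ M, IntegrableOn (fun t => (SM M t)^2) I volume := by
      intro M
      have hc1 : IntegrableOn (fun _ : ℝ => (∑ k ∈ Finset.Ico N M, |a k|)^2) I volume :=
        MeasureTheory.integrableOn_const measure_Ioo_lt_top.ne
      refine hc1.mono' (((hSMmeas M).pow_const 2).aestronglyMeasurable) ?_
      filter_upwards with t
      rw [Real.norm_eq_abs, abs_of_nonneg (sq_nonneg _)]
      rw [← sq_abs (SM M t)]
      exact pow_le_pow_left₀ (abs_nonneg _) (hSMbdd M t) 2
    have hSMval : ∀ M, ∫ t in I, (SM M t)^2 ∂volume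
        = (1/2^N) * ∑ k ∈ Finset.Ico N M, (a k)^2 :=
      fun M => integral_sq_sum N m a (Finset.Ico N M) (fun k hk => (Finset.mem_Ico.1 hk).1)
    have hsumtail : ∀ M, ∑ k ∈ Finset.Ico N M, (a k)^2 ≤ δ^2/2 := by
      intro M
      refine le_of_lt (lt_of_le_of_lt ?_ hNtail)
      rw [Finset.sum_Ico_eq_sum_range]
      have hsummable : Summable (fun j => (a (j + N))^2) := by
        exact (summable_nat_add_iff N).2 ha
      have hco : ∀ k : ℕ, a (N + k) ^ 2 = a (k + N) ^ 2 := fun k => by rw [add_comm]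
      simp only [hco]
      exact hsummable.sum_le_tsum _ (fun _ _ => sq_nonneg _)
    have hlint : ∀ M, ∫⁻ t in B, ENNReal.ofReal ((SM M t)^2) ∂volume
        ≤ ENNReal.ofReal ((1/2^N) * (δ^2/2)) := by
      intro M
      calc ∫⁻ t in B, ENNReal.ofReal ((SM M t)^2) ∂volume
          ≤ ∫⁻ t in I, ENNReal.ofReal ((SM M t)^2) ∂volume := lintegral_mono_set hBI
        _ = ENNReal.ofReal (∫ t in I, (SM M t)^2 ∂volume) :=
            (ofReal_integral_eq_lintegral_ofReal (hSMint M)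
              (Filter.Eventually.of_forall fun t => sq_nonneg _)).symm
        _ ≤ ENNReal.ofReal ((1/2^N) * (δ^2/2)) := by
            rw [hSMval M]
            refine ENNReal.ofReal_le_ofReal ?_
            have := hsumtail M
            have h2 : (0:ℝ) ≤ 1/2^N := by positivity
            nlinarith
    -- W' conull on B
    have hWae : ∀ᵐ t ∂(volume.restrict B),
        HasSum (fun k => a k * fR k t) (x t) ∧ x t = x' t := by
      have h1 : μ {t | ¬ (HasSum (fun k => a k * fR k t) (x t) ∧ x t = x' t)} = 0 := by
        rw [← ae_iff]
        filter_upwards [hae, hx'ae] with t h1 h2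
        exact ⟨h1, h2⟩
      rw [ae_iff]
      rw [hμ, Measure.restrict_apply' measurableSet_Icc] at h1
      rw [Measure.restrict_apply' hBmeas]
      refine measure_mono_null ?_ h1
      intro t ⟨ht1, ht2⟩
      exact ⟨ht1, hIsub (hBI ht2)⟩
    -- convergence of tails
    have hxlim : ∀ t, (HasSum (fun k => a k * fR k t) (x t) ∧ x t = x' t) →
        Tendsto (fun M => SM M t) atTop (𝓝 (x' t - g N t)) := by
      rintro t ⟨h1, h2⟩
      have hp := h1.tendsto_sum_nat
      rw [h2] at hp
      refine Tendsto.congr' ?_ (hp.sub (tendsto_const_nhds (x := g N t)))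
      filter_upwards [eventually_ge_atTop N] with M hM
      rw [hSM, hg]
      dsimp only
      rw [Finset.sum_Ico_eq_sub _ hM]
    -- chebyshev
    have hcheb : ENNReal.ofReal (δ^2) * volume B ≤ ENNReal.ofReal ((1/2^N) * (δ^2/2)) := by
      calc ENNReal.ofReal (δ^2) * volume B
          = ∫⁻ _ in B, ENNReal.ofReal (δ^2) ∂volume := (setLIntegral_const B _).symm
        _ ≤ ∫⁻ t in B, ENNReal.ofReal ((x' t - g N t)^2) ∂volume := by
            refine lintegral_mono_ae ?_
            filter_upwards [ae_restrict_mem hBmeas] with t ht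
            exact ENNReal.ofReal_le_ofReal (le_of_lt ht.2)
        _ ≤ ∫⁻ t in B, Filter.liminf (fun M => ENNReal.ofReal ((SM M t)^2)) atTop ∂volume := by
            refine lintegral_mono_ae ?_
            filter_upwards [hWae] with t ht
            have h1 := hxlim t ht
            have h2 : Tendsto (fun M => ENNReal.ofReal ((SM M t)^2)) atTop
                (𝓝 (ENNReal.ofReal ((x' t - g N t)^2))) :=
              ENNReal.tendsto_ofReal (h1.pow 2)
            rw [h2.liminf_eq]
        _ ≤ Filter.liminf (fun M => ∫⁻ t in B, ENNReal.ofReal ((SM M t)^2) ∂volume) atTop :=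
            lintegral_liminf_le (fun M => ((hSMmeas M).pow_const 2).ennreal_ofReal)
        _ ≤ Filter.liminf (fun _ : ℕ => ENNReal.ofReal ((1/2^N) * (δ^2/2))) atTop :=
            liminf_le_liminf (Eventually.of_forall hlint)
        _ = ENNReal.ofReal ((1/2^N) * (δ^2/2)) := liminf_const _
    -- bound on volume B
    have hvolB : volume B ≤ ENNReal.ofReal ((1/2^N)/2) := by
      have hring : (1/2^N : ℝ) * (δ^2/2) = δ^2 * ((1/2^N)/2) := by ring
      rw [hring, ENNReal.ofReal_mul (sq_nonneg δ)] at hcheb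
      exact (ENNReal.mul_le_mul_iff_right
        (ne_of_gt (ENNReal.ofReal_pos.2 (by positivity))) ENNReal.ofReal_ne_top).1 hcheb
    -- the good set
    set W : Set ℝ := {t | HasSum (fun k => a k * fR k t) (x t) ∧ x t = x' t} with hW
    set E : Set ℝ := (I ∩ W) \ B with hE
    have hWc : μ {t | ¬ t ∈ W} = 0 := by
      rw [← ae_iff]
      filter_upwards [hae, hx'ae] with t h1 h2
      exact ⟨h1, h2⟩
    have hWnull : volume (I \ W) = 0 := by
      rw [hμ, Measure.restrict_apply' measurableSet_Icc] at hWc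
      refine measure_mono_null ?_ hWc
      intro t ⟨ht1, ht2⟩
      exact ⟨ht2, hIsub ht1⟩
    have hIval : volume I = ENNReal.ofReal (1/2^N) := by
      rw [hI, Real.volume_Ioo]
      congr 1
      field_simp
      ring
    have hcover : I ⊆ (I \ W) ∪ B ∪ E := by
      intro t ht
      by_cases h1 : t ∈ W
      · by_cases h2 : t ∈ B
        · exact Or.inl (Or.inr h2)
        · exact Or.inr ⟨⟨ht, h1⟩, h2⟩
      · exact Or.inl (Or.inl ⟨ht, h1⟩)
    have hEvol : volume E ≠ 0 := by
      intro h0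
      have hle : volume I ≤ volume (I \ W) + volume B + volume E := by
        refine (measure_mono hcover).trans ?_
        refine (measure_union_le _ _).trans ?_
        exact add_le_add_left (measure_union_le _ _) _
      rw [h0, hWnull, hIval, zero_add, add_zero] at hle
      have hle2 := hle.trans hvolB
      rw [ENNReal.ofReal_le_ofReal_iff (by positivity)] at hle2
      have : (0:ℝ) < 1/2^N := by positivity
      linarith
    have hEIcc : E ⊆ Set.Icc (0:ℝ) 1 := fun t ht => hIsub ht.1.1
    have hμE : 0 < μ E := by
      rw [hμ, Measure.restrict_apply' measurableSet_Icc,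
        Set.inter_eq_self_of_subset_left hEIcc]
      exact pos_iff_ne_zero.2 hEvol
    -- |x t| ≥ c on E
    have hcle : ∀ t ∈ E, c ≤ |x t| := by
      rintro t ⟨⟨htI, htW⟩, htnB⟩
      have h4 : (x' t - g N t)^2 ≤ δ^2 := by
        by_contra h4
        push_neg at h4
        exact htnB ⟨htI, h4⟩
      have habs : |x' t - g N t| ≤ δ := by
        refine abs_le.2 ⟨?_, ?_⟩
        · nlinarith [sq_nonneg (x' t - g N t + δ)]
        · nlinarith [sq_nonneg (x' t - g N t - δ)]
      have h5 := hSNabs t htI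
      have h6 : |g N t| - |x t - g N t| ≤ |x t| := by
        have h7 := abs_sub_abs_le_abs_sub (g N t) (x t)
        have h8 : |g N t - x t| = |x t - g N t| := abs_sub_comm _ _
        linarith
      rw [htW.2] at h6 ⊢
      rw [hc]
      linarith
    -- conclude
    refine hbc.trans ?_
    have htop : eLpNorm x ⊤ μ = essSup (fun t => (‖x t‖₊ : ℝ≥0∞)) μ := by
      rw [eLpNorm_exponent_top]
      rfl
    rw [htop]
    by_contra hlt
    push_neg at hlt
    have haemem := ae_le_essSup (μ := μ) (f := fun t => (‖x t‖₊ : ℝ≥0∞))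
    have hE0 : μ E = 0 := by
      rw [ae_iff] at haemem
      refine measure_mono_null ?_ haemem
      intro t ht
      simp only [Set.mem_setOf_eq, not_le]
      have h1 : ENNReal.ofReal c ≤ (‖x t‖₊ : ℝ≥0∞) := by
        rw [← enorm_eq_nnnorm, Real.enorm_eq_ofReal_abs]
        exact ENNReal.ofReal_le_ofReal (hcle t ht)
      exact lt_of_lt_of_le hlt h1
    rw [hE0] at hμE
    exact lt_irrefl _ hμE
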